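/- For any covering polyhedron C ⊆ ℝ^n_+, the integer hull conv(C ∩ ℤ^n) is also a covering polyhedron: there exist m ∈ ℕ, a matrix M ∈ ℝ^{m×n} with nonnegative entries, and a vector d ∈ ℝ^m with nonnegative entries, such that conv(C ∩ ℤ^n) = {x ∈ ℝ^n_+ : Mx ≥ d}. -/

import Mathlib

namespace IHC
variable {N : ℕ}

def dot (r x : Fin N → ℝ) : ℝ := ∑ j, r j * x j

@[simp] lemma dot_zero_left (x : Fin N → ℝ) : dot 0 x = 0 := by simp [dot]

lemma dot_smul_left (c : ℝ) (r x : Fin N → ℝ) : dot (c • r) x = c * dot r x := by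
  simp [dot, Finset.mul_sum, mul_assoc]

lemma dot_sub_left (r s x : Fin N → ℝ) : dot (r - s) x = dot r x - dot s x := by
  simp [dot, sub_mul, Finset.sum_sub_distrib]

/-- A set cut out by finitely many homogeneous inequalities `dot (A i) x ≥ 0`. -/
def IsHCone (X : Set (Fin N → ℝ)) : Prop :=
  ∃ (m : ℕ) (A : Fin m → Fin N → ℝ), X = {x | ∀ i, 0 ≤ dot (A i) x}

lemma isHCone_of_index {ι : Type} [Fintype ι] (A : ι → Fin N → ℝ) :
    IsHCone {x | ∀ i, 0 ≤ dot (A i) x} := by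
  refine ⟨Fintype.card ι, A ∘ (Fintype.equivFin ι).symm, ?_⟩
  ext x
  simp only [Set.mem_setOf_eq, Function.comp]
  exact ⟨fun h i => h _, fun h i => by simpa using h ((Fintype.equivFin ι) i)⟩

lemma fourier_motzkin (m : ℕ) (A : Fin m → Fin N → ℝ) (a : Fin N → ℝ) :
    IsHCone {x | ∃ c, 0 ≤ c ∧ ∀ i, c * dot (A i) a ≤ dot (A i) x} := by
  classical
  set α : Fin m → ℝ := fun i => dot (A i) a with hα
  set B : (Fin m ⊕ Fin m × Fin m) → Fin N → ℝ :=
    Sum.elim (fun i => if α i < 0 then 0 else A i)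
      (fun p => if 0 < α p.1 ∧ α p.2 < 0 then α p.1 • A p.2 - α p.2 • A p.1 else 0)
    with hB
  have key : {x : Fin N → ℝ | ∃ c, 0 ≤ c ∧ ∀ i, c * dot (A i) a ≤ dot (A i) x}
      = {x | ∀ u, 0 ≤ dot (B u) x} := by
    ext x
    simp only [Set.mem_setOf_eq]
    constructor
    · rintro ⟨c, hc, h⟩ u
      match u with
      | .inl i =>
        rw [hB, Sum.elim_inl]
        by_cases hi : α i < 0
        · rw [if_pos hi]; simp
        · rw [if_neg hi]
          have h1 : 0 ≤ α i := not_lt.1 hi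
          have h2 := h i
          nlinarith
      | .inr (i, j) =>
        rw [hB, Sum.elim_inr]
        by_cases hij : 0 < α i ∧ α j < 0
        · rw [if_pos hij, dot_sub_left, dot_smul_left, dot_smul_left]
          nlinarith [h i, h j, hij.1, hij.2]
        · rw [if_neg hij]; simp
    · intro h
      have hl : ∀ i, ¬ α i < 0 → 0 ≤ dot (A i) x := by
        intro i hi
        have := h (.inl i)
        rwa [hB, Sum.elim_inl, if_neg hi] at this
      have hpair : ∀ i j, 0 < α i → α j < 0 →
          α j * dot (A i) x ≤ α i * dot (A j) x := by
        intro i j hi hj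
        have := h (.inr (i, j))
        rw [hB, Sum.elim_inr, if_pos ⟨hi, hj⟩, dot_sub_left, dot_smul_left,
          dot_smul_left] at this
        linarith
      set T : Finset ℝ :=
        insert 0 ((Finset.univ.filter (fun j => α j < 0)).image (fun j => dot (A j) x / α j))
        with hT
      have hTne : T.Nonempty := ⟨0, Finset.mem_insert_self _ _⟩
      refine ⟨T.max' hTne, T.le_max' 0 (Finset.mem_insert_self _ _), ?_⟩
      intro i
      show T.max' hTne * α i ≤ dot (A i) x
      rcases lt_trichotomy (α i) 0 with hneg | hzero | hpos
      · have hmem : dot (A i) x / α i ∈ T :=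
          Finset.mem_insert_of_mem
            (Finset.mem_image_of_mem _ (Finset.mem_filter.2 ⟨Finset.mem_univ _, hneg⟩))
        have h1 := T.le_max' _ hmem
        rw [div_le_iff_of_neg hneg] at h1
        linarith
      · rw [hzero, mul_zero]
        exact hl i (by rw [hzero]; exact lt_irrefl 0)
      · have hub : T.max' hTne ≤ dot (A i) x / α i := by
          apply Finset.max'_le
          intro y hy
          rcases Finset.mem_insert.1 hy with rfl | hy'
          · exact div_nonneg (hl i (not_lt.2 hpos.le)) hpos.le
          · obtain ⟨j, hj, rfl⟩ := Finset.mem_image.1 hy'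
            have hjneg : α j < 0 := (Finset.mem_filter.1 hj).2
            rw [div_le_iff_of_neg hjneg, div_mul_eq_mul_div, div_le_iff₀ hpos]
            nlinarith [hpair i j hpos hjneg]
        rw [le_div_iff₀ hpos] at hub
        linarith
  rw [key]
  exact isHCone_of_index B


lemma dot_neg_left (r x : Fin N → ℝ) : dot (-r) x = -dot r x := by
  simp [dot, neg_mul]

@[simp] lemma dot_zero_right (r : Fin N → ℝ) : dot r 0 = 0 := by simp [dot]

lemma dot_smul_right (c : ℝ) (r x : Fin N → ℝ) : dot r (c • x) = c * dot r x := by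
  unfold dot
  rw [Finset.mul_sum]
  refine Finset.sum_congr rfl fun j _ => ?_
  simp only [Pi.smul_apply, smul_eq_mul]
  ring

lemma dot_sub_right (r x y : Fin N → ℝ) : dot r (x - y) = dot r x - dot r y := by
  simp [dot, mul_sub, Finset.sum_sub_distrib]

def coneOf {k : ℕ} (g : Fin k → Fin N → ℝ) : Set (Fin N → ℝ) :=
  {x | ∃ t : Fin k → ℝ, (∀ i, 0 ≤ t i) ∧ x = ∑ i, t i • g i}

lemma isHCone_coneOf : ∀ (k : ℕ) (g : Fin k → Fin N → ℝ), IsHCone (coneOf g) := by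
  intro k
  induction k with
  | zero =>
    intro g
    have h0 : coneOf g = {x : Fin N → ℝ | ∀ u : Fin N ⊕ Fin N,
        0 ≤ dot (Sum.elim (fun j => Pi.single j (1:ℝ)) (fun j => -Pi.single j (1:ℝ)) u) x} := by
      have hsingle : ∀ (j : Fin N) (x : Fin N → ℝ), dot (Pi.single j (1:ℝ)) x = x j := by
        intro j x
        simp [dot, Pi.single_apply, ite_mul]
      ext x
      constructor
      · rintro ⟨t, _, rfl⟩ u
        have : (∑ i : Fin 0, t i • g i) = 0 := by simp
        rw [this]
        match u with
        | .inl j => rw [Sum.elim_inl, dot_zero_right]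
        | .inr j => rw [Sum.elim_inr, dot_zero_right]
      · intro h
        refine ⟨fun i => 0, fun i => le_refl _, ?_⟩
        have : (∑ i : Fin 0, (0:ℝ) • g i) = 0 := by simp
        rw [this]
        funext j
        have h1 := h (.inl j)
        have h2 := h (.inr j)
        rw [Sum.elim_inl, hsingle] at h1
        rw [Sum.elim_inr, dot_neg_left, hsingle] at h2
        have : x j = 0 := le_antisymm (by linarith) h1
        simp [this]
    rw [h0]
    exact isHCone_of_index _
  | succ k ih =>
    intro g
    obtain ⟨m, A, hA⟩ := ih (g ∘ Fin.succ)
    have hstep : coneOf g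
        = {x | ∃ c, 0 ≤ c ∧ ∀ i, c * dot (A i) (g 0) ≤ dot (A i) x} := by
      ext x
      constructor
      · rintro ⟨t, ht, rfl⟩
        refine ⟨t 0, ht 0, fun i => ?_⟩
        have hmem : (∑ i', t i' • g i') - t 0 • g 0 ∈ coneOf (g ∘ Fin.succ) := by
          refine ⟨fun i' => t i'.succ, fun i' => ht _, ?_⟩
          rw [Fin.sum_univ_succ, add_sub_cancel_left]
          rfl
        rw [hA] at hmem
        have := hmem i
        rw [dot_sub_right, dot_smul_right] at this
        linarith
      · rintro ⟨c, hc, h⟩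
        have hmem : x - c • g 0 ∈ coneOf (g ∘ Fin.succ) := by
          rw [hA]
          intro i
          rw [dot_sub_right, dot_smul_right]
          linarith [h i]
        obtain ⟨t, ht, hx⟩ := hmem
        refine ⟨Fin.cons c t, ?_, ?_⟩
        · intro i
          refine Fin.cases ?_ ?_ i
          · simpa using hc
          · intro i'; simpa using ht i'
        · rw [Fin.sum_univ_succ]
          simp only [Fin.cons_zero, Fin.cons_succ]
          have : x = c • g 0 + (x - c • g 0) := by abel
          rw [this, hx]
          rfl
    rw [hstep]
    exact fourier_motzkin m A (g 0)

lemma isHCone_coneOf' {ι : Type} [Fintype ι] (g : ι → Fin N → ℝ) :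
    IsHCone {x : Fin N → ℝ | ∃ t : ι → ℝ, (∀ i, 0 ≤ t i) ∧ x = ∑ i, t i • g i} := by
  classical
  set e := Fintype.equivFin ι with he
  have : {x : Fin N → ℝ | ∃ t : ι → ℝ, (∀ i, 0 ≤ t i) ∧ x = ∑ i, t i • g i}
      = coneOf (g ∘ e.symm) := by
    ext x
    constructor
    · rintro ⟨t, ht, rfl⟩
      refine ⟨t ∘ e.symm, fun i => ht _, ?_⟩
      rw [← Equiv.sum_comp e.symm (fun i => t i • g i)]
      rfl
    · rintro ⟨t, ht, rfl⟩
      refine ⟨t ∘ e, fun i => ht _, ?_⟩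
      rw [← Equiv.sum_comp e.symm (fun i => (t ∘ e) i • g i)]
      simp
  rw [this]
  exact isHCone_coneOf _ _


/-- The set `conv{v 1, ..., v k} + ℝⁿ₊` (as explicit combinations) is a covering polyhedron. -/
lemma covering_of_Q {n k : ℕ} (v : Fin k → Fin n → ℝ) (hv : ∀ i j, 0 ≤ v i j) :
    ∃ (m : ℕ) (M : Fin m → Fin n → ℝ) (d : Fin m → ℝ),
      (∀ i j, 0 ≤ M i j) ∧ (∀ i, 0 ≤ d i) ∧
      {x : Fin n → ℝ | ∃ t : Fin k → ℝ, (∀ i, 0 ≤ t i) ∧ ∑ i, t i = 1 ∧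
        ∃ r : Fin n → ℝ, (∀ j, 0 ≤ r j) ∧ x = (∑ i, t i • v i) + r}
      = {x | (∀ j, 0 ≤ x j) ∧ ∀ i, d i ≤ ∑ j, M i j * x j} := by
  classical
  set G : (Fin k ⊕ Fin n) → Fin (n+1) → ℝ :=
    Sum.elim (fun i => Fin.snoc (v i) 1) (fun j => Fin.snoc (Pi.single j (1:ℝ)) 0) with hG
  obtain ⟨m, A, hA⟩ := isHCone_coneOf' G
  -- evaluation lemmas
  have hlast : ∀ s : Fin k ⊕ Fin n → ℝ,
      (∑ u, s u • G u) (Fin.last n) = ∑ i, s (Sum.inl i) := by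
    intro s
    rw [Finset.sum_apply]
    rw [Fintype.sum_sum_type]
    simp [hG]
  have hcast : ∀ (s : Fin k ⊕ Fin n → ℝ) (j : Fin n),
      (∑ u, s u • G u) (Fin.castSucc j) = (∑ i, s (Sum.inl i) * v i j) + s (Sum.inr j) := by
    intro s j
    rw [Finset.sum_apply]
    rw [Fintype.sum_sum_type]
    simp [hG, Pi.single_apply, mul_ite]
  -- the set Q equals the H-form
  set Q : Set (Fin n → ℝ) := {x | ∃ t : Fin k → ℝ, (∀ i, 0 ≤ t i) ∧ ∑ i, t i = 1 ∧
      ∃ r : Fin n → ℝ, (∀ j, 0 ≤ r j) ∧ x = (∑ i, t i • v i) + r} with hQ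
  have claim1 : ∀ x : Fin n → ℝ, x ∈ Q ↔
      (Fin.snoc x 1 : Fin (n+1) → ℝ) ∈
        {y : Fin (n+1) → ℝ | ∃ s : Fin k ⊕ Fin n → ℝ, (∀ u, 0 ≤ s u) ∧ y = ∑ u, s u • G u} := by
    intro x
    constructor
    · rintro ⟨t, ht, hsum, r, hr, rfl⟩
      refine ⟨Sum.elim t r, fun u => by cases u with
        | inl i => exact ht i
        | inr j => exact hr j, ?_⟩
      funext j'
      refine Fin.lastCases ?_ ?_ j'
      · rw [hlast]
        simp [hsum]
      · intro j
        rw [hcast]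
        simp [Finset.sum_apply]
    · rintro ⟨s, hs, hx⟩
      have h1 : (1:ℝ) = ∑ i, s (Sum.inl i) := by
        have := congrFun hx (Fin.last n)
        rw [hlast] at this
        simpa using this
      refine ⟨fun i => s (Sum.inl i), fun i => hs _, h1.symm, fun j => s (Sum.inr j),
        fun j => hs _, ?_⟩
      funext j
      have := congrFun hx (Fin.castSucc j)
      rw [hcast] at this
      simp only [Fin.snoc_castSucc] at this
      rw [this]
      simp [Finset.sum_apply]
  have hQH : Q = {x : Fin n → ℝ | ∀ i, 0 ≤ dot (A i) (Fin.snoc x 1)} := by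
    ext x
    rw [claim1 x]
    constructor
    · intro hx
      have : (Fin.snoc x 1 : Fin (n+1) → ℝ) ∈ {y : Fin (n+1) → ℝ | ∀ i, 0 ≤ dot (A i) y} := by
        rw [← hA]; exact hx
      exact this
    · intro hx
      have : (Fin.snoc x 1 : Fin (n+1) → ℝ) ∈ {y : Fin (n+1) → ℝ | ∀ i, 0 ≤ dot (A i) y} := hx
      rw [← hA] at this
      exact this
  -- expansion of the dot product
  have ddot : ∀ (i : Fin m) (x : Fin n → ℝ), dot (A i) (Fin.snoc x 1)
      = (∑ j, A i (Fin.castSucc j) * x j) + A i (Fin.last n) := by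
    intro i x
    unfold dot
    rw [Fin.sum_univ_castSucc]
    simp
  -- nonnegativity of the matrix entries
  have hMnn : ∀ (i : Fin m) (j : Fin n), 0 ≤ A i (Fin.castSucc j) := by
    intro i j
    have hmem : G (Sum.inr j) ∈ {y : Fin (n+1) → ℝ | ∃ s : Fin k ⊕ Fin n → ℝ,
        (∀ u, 0 ≤ s u) ∧ y = ∑ u, s u • G u} := by
      refine ⟨fun u => if u = Sum.inr j then 1 else 0, fun u => by positivity, ?_⟩
      have heach : ∀ u : Fin k ⊕ Fin n, (if u = Sum.inr j then (1:ℝ) else 0) • G u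
          = if u = Sum.inr j then G u else 0 := by
        intro u; by_cases h : u = Sum.inr j <;> simp [h]
      rw [Finset.sum_congr rfl (fun u _ => heach u),
        Finset.sum_ite_eq' Finset.univ (Sum.inr j) G]
      simp
    rw [hA] at hmem
    have := hmem i
    have hd : dot (A i) (G (Sum.inr j)) = A i (Fin.castSucc j) := by
      rw [hG]
      unfold dot
      rw [Fin.sum_univ_castSucc]
      simp [Pi.single_apply, mul_ite]
    rw [hd] at this
    exact this
  refine ⟨m, fun i j => A i (Fin.castSucc j), fun i => max (-(A i (Fin.last n))) 0,
    hMnn, fun i => le_max_right _ _, ?_⟩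
  ext x
  constructor
  · intro hx
    have hx0 : ∀ j, 0 ≤ x j := by
      obtain ⟨t, ht, hsum, r, hr, rfl⟩ := hx
      intro j
      simp only [Pi.add_apply, Finset.sum_apply, Pi.smul_apply, smul_eq_mul]
      have : 0 ≤ ∑ i, t i * v i j :=
        Finset.sum_nonneg fun i _ => mul_nonneg (ht i) (hv i j)
      linarith [hr j]
    have hxH : ∀ i, 0 ≤ dot (A i) (Fin.snoc x 1) := by
      rw [hQH] at hx; exact hx
    refine ⟨hx0, fun i => ?_⟩
    have h1 := hxH i
    rw [ddot] at h1
    have h2 : 0 ≤ ∑ j, A i (Fin.castSucc j) * x j :=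
      Finset.sum_nonneg fun j _ => mul_nonneg (hMnn i j) (hx0 j)
    exact max_le (by linarith) h2
  · rintro ⟨hx0, hxi⟩
    rw [hQH]
    intro i
    rw [ddot]
    have := hxi i
    have h2 : -(A i (Fin.last n)) ≤ max (-(A i (Fin.last n))) 0 := le_max_left _ _
    linarith

end IHC

open Pointwise

noncomputable section

/-- A covering polyhedron: {x ∈ ℝⁿ₊ : Mx ≥ d} with M, d having nonnegative entries. -/
def IsCoveringPolyhedron {n : ℕ} (C : Set (Fin n → ℝ)) : Prop :=
  ∃ (m : ℕ) (M : Fin m → Fin n → ℝ) (d : Fin m → ℝ),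
    (∀ i j, 0 ≤ M i j) ∧ (∀ i, 0 ≤ d i) ∧
    C = {x | (∀ j, 0 ≤ x j) ∧ ∀ i, d i ≤ ∑ j, M i j * x j}

/-- The integer points of ℝⁿ. -/
def intPoints {n : ℕ} : Set (Fin n → ℝ) := {x | ∀ i, ∃ z : ℤ, x i = (z : ℝ)}

/-- Proposition: the integer hull of a covering polyhedron is a covering polyhedron. -/
theorem integer_hull_covering {n : ℕ} (C : Set (Fin n → ℝ))
    (hC : IsCoveringPolyhedron C) :
    IsCoveringPolyhedron (convexHull ℝ (C ∩ intPoints)) := by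
  classical
  obtain ⟨m₀, M₀, d₀, hM₀, hd₀, hCdef⟩ := hC
  set S : Set (Fin n → ℝ) := C ∩ intPoints with hS
  -- C is upward closed
  have hCup : ∀ x ∈ C, ∀ y : Fin n → ℝ, (∀ j, x j ≤ y j) → y ∈ C := by
    intro x hx y hxy
    rw [hCdef] at hx ⊢
    obtain ⟨hx0, hxM⟩ := hx
    refine ⟨fun j => le_trans (hx0 j) (hxy j), fun i => le_trans (hxM i) ?_⟩
    exact Finset.sum_le_sum fun j _ => mul_le_mul_of_nonneg_left (hxy j) (hM₀ i j)
  have hC0 : ∀ x ∈ C, ∀ j, 0 ≤ x j := by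
    intro x hx
    rw [hCdef] at hx
    exact hx.1
  -- natural-number points of C
  set T : Set (Fin n → ℕ) := {y | (fun j => (y j : ℝ)) ∈ C} with hT
  have hStoT : ∀ x ∈ S, ∃ y : Fin n → ℕ, (fun j => (y j : ℝ)) = x := by
    intro x hx
    obtain ⟨hxC, hxI⟩ := hx
    choose z hz using hxI
    refine ⟨fun j => (z j).toNat, funext fun j => ?_⟩
    have h0 : (0:ℤ) ≤ z j := by
      have := hC0 x hxC j
      rw [hz j] at this
      exact_mod_cast this
    rw [← Int.cast_natCast, Int.toNat_of_nonneg h0, ← hz j]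
  -- minimal elements of T
  set V₀ : Set (Fin n → ℕ) := {y | y ∈ T ∧ ∀ z ∈ T, z ≤ y → z = y} with hV₀
  have hanti : IsAntichain (· ≤ ·) V₀ := by
    intro a ha b hb hne hle
    exact hne (hb.2 a ha.1 hle)
  have hwo : IsWellOrder ℕ (· < ·) := inferInstance
  have hfin : V₀.Finite :=
    hanti.finite_of_partiallyWellOrderedOn
      (Set.isPWO_of_wellQuasiOrderedLE V₀)
  have hdom : ∀ y ∈ T, ∃ v ∈ V₀, ∀ j, v j ≤ y j := by
    have key : ∀ s : ℕ, ∀ y ∈ T, (∑ j, y j) = s → ∃ v ∈ V₀, ∀ j, v j ≤ y j := by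
      intro s
      induction s using Nat.strong_induction_on with
      | _ s ih =>
        intro y hy hsum
        by_cases hmin : ∀ z ∈ T, z ≤ y → z = y
        · exact ⟨y, ⟨hy, hmin⟩, fun j => le_refl _⟩
        · push_neg at hmin
          obtain ⟨z, hz, hzy, hne⟩ := hmin
          have hlt : (∑ j, z j) < s := by
            rw [← hsum]
            refine Finset.sum_lt_sum (fun j _ => hzy j) ?_
            obtain ⟨j, hj⟩ := Function.ne_iff.1 hne
            exact ⟨j, Finset.mem_univ _, lt_of_le_of_ne (hzy j) hj⟩
          obtain ⟨v, hv, hvz⟩ := ih _ hlt z hz rfl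
          exact ⟨v, hv, fun j => le_trans (hvz j) (hzy j)⟩
    intro y hy
    exact key _ y hy rfl
  -- enumerate V₀
  set F : Finset (Fin n → ℕ) := hfin.toFinset with hF
  set k : ℕ := F.card with hk
  set e : {y // y ∈ F} ≃ Fin k := F.equivFin with he
  set v : Fin k → Fin n → ℕ := fun i => (e.symm i : Fin n → ℕ) with hv
  set vr : Fin k → Fin n → ℝ := fun i j => (v i j : ℝ) with hvr
  have hvr0 : ∀ i j, 0 ≤ vr i j := fun i j => Nat.cast_nonneg _
  have hvV₀ : ∀ i, v i ∈ V₀ := by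
    intro i
    exact hfin.mem_toFinset.mp (e.symm i).2
  have hvS : ∀ i, vr i ∈ S := by
    intro i
    refine ⟨(hvV₀ i).1, fun j => ⟨(v i j : ℤ), by push_cast; rfl⟩⟩
  obtain ⟨m, M, d, hM, hd, hQeq⟩ := IHC.covering_of_Q vr hvr0
  refine ⟨m, M, d, hM, hd, ?_⟩
  rw [← hQeq]
  -- it remains: convexHull ℝ S = Q
  set Q : Set (Fin n → ℝ) := {x : Fin n → ℝ | ∃ t : Fin k → ℝ, (∀ i, 0 ≤ t i) ∧ ∑ i, t i = 1 ∧
      ∃ r : Fin n → ℝ, (∀ j, 0 ≤ r j) ∧ x = (∑ i, t i • vr i) + r} with hQdef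
  show convexHull ℝ S = Q
  -- single-coordinate step for the ⊇ direction
  have hstep : ∀ (j : Fin n) (c : ℝ), 0 ≤ c → ∀ w ∈ convexHull ℝ S,
      w + c • (Pi.single j 1 : Fin n → ℝ) ∈ convexHull ℝ S := by
    intro j c hc w hw
    have hsub' : S + ({c • (Pi.single j 1 : Fin n → ℝ)} : Set (Fin n → ℝ)) ⊆ convexHull ℝ S := by
      rintro _ ⟨s, hs, y, hy, rfl⟩
      rw [Set.mem_singleton_iff] at hy
      subst hy
      obtain ⟨hsC, hsI⟩ := hs
      set q : ℕ := ⌊c⌋₊ with hq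
      set θ : ℝ := c - q with hθ
      have hθ0 : 0 ≤ θ := sub_nonneg.2 (Nat.floor_le hc)
      have hθ1 : θ ≤ 1 := by
        have := Nat.lt_floor_add_one c
        rw [hθ]
        linarith
      set p1 : Fin n → ℝ := s + (q : ℝ) • (Pi.single j 1 : Fin n → ℝ) with hp1def
      set p2 : Fin n → ℝ := s + ((q : ℝ) + 1) • (Pi.single j 1 : Fin n → ℝ) with hp2def
      have hsingle_int : ∀ (a : ℝ) (j' : Fin n), (a • (Pi.single j 1 : Fin n → ℝ)) j'
          = if j' = j then a else 0 := by
        intro a j'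
        simp [Pi.single_apply, mul_ite]
      have hmemS : ∀ (a : ℝ), 0 ≤ a → (∃ za : ℤ, a = (za : ℝ)) →
          s + a • (Pi.single j 1 : Fin n → ℝ) ∈ S := by
        rintro a ha ⟨za, rfl⟩
        constructor
        · refine hCup s hsC _ fun j' => ?_
          simp only [Pi.add_apply]
          rw [hsingle_int]
          by_cases h : j' = j <;> simp [h, ha]
        · intro j'
          obtain ⟨zj, hzj⟩ := hsI j'
          simp only [Pi.add_apply]
          rw [hsingle_int]
          by_cases h : j' = j
          · exact ⟨zj + za, by rw [hzj]; push_cast; simp [h]⟩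
          · exact ⟨zj, by rw [hzj]; simp [h]⟩
      have hp1S : p1 ∈ S := hmemS _ (by positivity) ⟨(q : ℤ), by push_cast; rfl⟩
      have hp2S : p2 ∈ S := hmemS _ (by positivity) ⟨(q : ℤ) + 1, by push_cast; rfl⟩
      have hcomb : s + c • (Pi.single j 1 : Fin n → ℝ) = (1 - θ) • p1 + θ • p2 := by
        rw [hp1def, hp2def]
        have hcq : c = (q : ℝ) + θ := by rw [hθ]; ring
        rw [hcq]
        funext j'
        simp only [Pi.add_apply, Pi.smul_apply, smul_eq_mul, Pi.single_apply]
        by_cases h : j' = j <;> simp [h] <;> ring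
      show s + c • (Pi.single j 1 : Fin n → ℝ) ∈ convexHull ℝ S
      rw [hcomb]
      exact (convex_convexHull ℝ S) (subset_convexHull ℝ S hp1S)
        (subset_convexHull ℝ S hp2S) (by linarith) hθ0 (by ring)
    have h1 : w + c • (Pi.single j 1 : Fin n → ℝ)
        ∈ convexHull ℝ S + convexHull ℝ {c • (Pi.single j 1 : Fin n → ℝ)} := by
      refine Set.add_mem_add hw ?_
      rw [convexHull_singleton]
      exact Set.mem_singleton _
    rw [← convexHull_add] at h1
    exact convexHull_min hsub' (convex_convexHull ℝ S) h1
  -- adding a nonnegative vector stays in the hull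
  have haddorth : ∀ (F' : Finset (Fin n)) (r : Fin n → ℝ), (∀ j, 0 ≤ r j) →
      (∀ j, j ∉ F' → r j = 0) → ∀ w ∈ convexHull ℝ S, w + r ∈ convexHull ℝ S := by
    intro F'
    induction F' using Finset.induction_on with
    | empty =>
      intro r hr hr0 w hw
      have : r = 0 := funext fun j => hr0 j (by simp)
      simpa [this] using hw
    | insert j F'' hj ih =>
      intro r hr hr0 w hw
      set r' : Fin n → ℝ := Function.update r j 0 with hr'def
      have hsplit : w + r = (w + r') + (r j) • (Pi.single j 1 : Fin n → ℝ) := by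
        funext j'
        simp only [Pi.add_apply, Pi.smul_apply, smul_eq_mul, hr'def]
        by_cases h : j' = j
        · subst h
          simp [Function.update_self, Pi.single_apply]
        · simp [Function.update_of_ne h, Pi.single_apply, Ne.symm h]
      rw [hsplit]
      refine hstep j (r j) (hr j) _ (ih r' ?_ ?_ w hw)
      · intro j'
        by_cases h : j' = j
        · subst h; simp [hr'def]
        · simpa [hr'def, Function.update_of_ne h] using hr j'
      · intro j' hj'
        by_cases h : j' = j
        · subst h; simp [hr'def]
        · rw [hr'def, Function.update_of_ne h]
          exact hr0 j' (fun hm => (Finset.mem_insert.mp hm).elim h hj')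
  apply Set.Subset.antisymm
  · -- convexHull S ⊆ Q : via minimality
    refine convexHull_min ?_ ?_
    · -- S ⊆ Q
      intro x hx
      obtain ⟨y, hyx⟩ := hStoT x hx
      have hyT : y ∈ T := by
        rw [hT, Set.mem_setOf_eq, hyx]
        exact hx.1
      obtain ⟨v₀, hv₀, hv₀y⟩ := hdom y hyT
      have hv₀F : v₀ ∈ F := by rw [hF, Set.Finite.mem_toFinset]; exact hv₀
      set i : Fin k := e ⟨v₀, hv₀F⟩ with hi
      have hvi : v i = v₀ := by
        have h2 : e.symm i = ⟨v₀, hv₀F⟩ := by rw [hi, Equiv.symm_apply_apply]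
        simp [hv, h2]
      refine ⟨fun i' => if i' = i then 1 else 0, fun i' => by positivity, by simp, 
        fun j => x j - vr i j, ?_, ?_⟩
      · intro j
        have hle : vr i j ≤ x j := by
          show (v i j : ℝ) ≤ x j
          rw [← congrFun hyx j, hvi]
          exact_mod_cast hv₀y j
        simpa [sub_nonneg] using hle
      · funext j
        have hsum : (∑ i', (if i' = i then (1:ℝ) else 0) • vr i') = vr i := by
          have heach : ∀ i' : Fin k, (if i' = i then (1:ℝ) else 0) • vr i'
              = if i' = i then vr i' else 0 := by
            intro i'; by_cases h : i' = i <;> simp [h]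
          rw [Finset.sum_congr rfl (fun i' _ => heach i'),
            Finset.sum_ite_eq' Finset.univ i vr]
          simp
        rw [hsum]
        simp
    · -- Q is convex
      rintro x₁ ⟨t₁, ht₁, hs₁, r₁, hr₁, rfl⟩ x₂ ⟨t₂, ht₂, hs₂, r₂, hr₂, rfl⟩ a b ha hb hab
      refine ⟨fun i => a * t₁ i + b * t₂ i,
        fun i => add_nonneg (mul_nonneg ha (ht₁ i)) (mul_nonneg hb (ht₂ i)), ?_,
        fun j => a * r₁ j + b * r₂ j,
        fun j => add_nonneg (mul_nonneg ha (hr₁ j)) (mul_nonneg hb (hr₂ j)), ?_⟩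
      · rw [Finset.sum_add_distrib, ← Finset.mul_sum, ← Finset.mul_sum, hs₁, hs₂]
        linarith
      · have hmix : (∑ i, (a * t₁ i + b * t₂ i) • vr i)
            = a • (∑ i, t₁ i • vr i) + b • (∑ i, t₂ i • vr i) := by
          rw [Finset.smul_sum, Finset.smul_sum, ← Finset.sum_add_distrib]
          refine Finset.sum_congr rfl fun i _ => ?_
          rw [add_smul, smul_smul, smul_smul]
        rw [hmix]
        funext j
        simp only [Pi.add_apply, Pi.smul_apply, smul_eq_mul]
        ring
  · -- Q ⊆ convexHull S
    rintro x ⟨t, ht, hsum, r, hr, rfl⟩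
    have hw : (∑ i, t i • vr i) ∈ convexHull ℝ S := by
      have := Finset.centerMass_mem_convexHull (Finset.univ : Finset (Fin k))
        (fun i _ => ht i) (by rw [hsum]; norm_num) (fun i _ => hvS i)
      rwa [Finset.centerMass_eq_of_sum_1 _ _ hsum] at this
    exact haddorth Finset.univ r hr (fun j hj => absurd (Finset.mem_univ j) hj) _ hw
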